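/- Let a ≠ 0, W(y) = Dy² - aTy + a², and let P be twice differentiable on an open interval with P(y₀) < 0 < y₀, W(y₀) > 0, W(P(y₀)) > 0, P'(y₀) = y₀W(P(y₀))/(P(y₀)W(y₀)), and suppose sign(y₀ + P(y₀)) = -sign(T) with T ≠ 0. Then sign(P''(y₀)) = -sign(T). In particular, if T > 0 then P is strictly concave and if T < 0 then P is strictly convex on its domain interior. -/

import Mathlib

open Real Set

private lemma sign_one_imp {x : ℝ} (h : Real.sign x = 1) : 0 < x := by
  rcases lt_trichotomy x 0 with h'|h'|h'
  · rw [Real.sign_of_neg h'] at h; norm_num at h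
  · rw [h', Real.sign_zero] at h; norm_num at h
  · exact h'

private lemma sign_negone_imp {x : ℝ} (h : Real.sign x = -1) : x < 0 := by
  rcases lt_trichotomy x 0 with h'|h'|h'
  · exact h'
  · rw [h', Real.sign_zero] at h; norm_num at h
  · rw [Real.sign_of_pos h'] at h; norm_num at h

theorem second_derivative_sign (a T D : ℝ) (ha : a ≠ 0) (hT : T ≠ 0)
    (W : ℝ → ℝ) (hW : ∀ y, W y = D * y ^ 2 - a * T * y + a ^ 2)
    (l r : ℝ) (P : ℝ → ℝ)
    (hdiff : ∀ y₀ ∈ Set.Ioo l r, DifferentiableAt ℝ P y₀)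
    (hdiff' : ∀ y₀ ∈ Set.Ioo l r, DifferentiableAt ℝ (deriv P) y₀)
    (hcond : ∀ y₀ ∈ Set.Ioo l r,
      P y₀ < 0 ∧ 0 < y₀ ∧ 0 < W y₀ ∧ 0 < W (P y₀) ∧
      deriv P y₀ = y₀ * W (P y₀) / (P y₀ * W y₀))
    (hpos : ∀ y₀ ∈ Set.Ioo l r, Real.sign (y₀ + P y₀) = -Real.sign T) :
    (∀ y₀ ∈ Set.Ioo l r, Real.sign (deriv (deriv P) y₀) = -Real.sign T) ∧
    (0 < T → StrictConcaveOn ℝ (Set.Ioo l r) P) ∧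
    (T < 0 → StrictConvexOn ℝ (Set.Ioo l r) P) := by
  have key : ∀ y₀ ∈ Set.Ioo l r,
      deriv (deriv P) y₀ =
        a^2 * ((P y₀)^2 - y₀^2) * W (P y₀) / ((P y₀)^3 * (W y₀)^2) := by
    intro y₀ hy
    obtain ⟨hp_neg, hy_pos, hWy, hWp, hP'⟩ := hcond y₀ hy
    have hp_ne : P y₀ ≠ 0 := ne_of_lt hp_neg
    have hWy_ne : W y₀ ≠ 0 := ne_of_gt hWy
    have hEq : deriv P =ᶠ[nhds y₀] fun y => y * W (P y) / (P y * W y) :=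
      Filter.eventuallyEq_of_mem (isOpen_Ioo.mem_nhds hy)
        (fun y hy' => (hcond y hy').2.2.2.2)
    rw [Filter.EventuallyEq.deriv_eq hEq]
    have hP : HasDerivAt P (deriv P y₀) y₀ := (hdiff y₀ hy).hasDerivAt
    set p' := deriv P y₀ with hp'def
    have hpoly : HasDerivAt (fun y => D * (P y)^2 - a*T*(P y) + a^2)
        (D * (2 * P y₀ ^ 1 * p') - a*T*p') y₀ :=
      (((hP.pow 2).const_mul D).sub (hP.const_mul (a*T))).add_const (a^2)
    have hWpoly : HasDerivAt (fun y : ℝ => D * y^2 - a*T*y + a^2)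
        (D * (2 * y₀ ^ 1 * 1) - a*T*1) y₀ :=
      ((((hasDerivAt_id y₀).pow 2).const_mul D).sub
        ((hasDerivAt_id y₀).const_mul (a*T))).add_const (a^2)
    have hnum : HasDerivAt (fun y => y * (D * (P y)^2 - a*T*(P y) + a^2))
        (1 * (D * (P y₀)^2 - a*T*(P y₀) + a^2) +
          y₀ * (D * (2 * P y₀ ^ 1 * p') - a*T*p')) y₀ :=
      (hasDerivAt_id y₀).mul hpoly
    have hden : HasDerivAt (fun y => P y * (D * y^2 - a*T*y + a^2))
        (p' * (D * y₀^2 - a*T*y₀ + a^2) + P y₀ * (D * (2 * y₀ ^ 1 * 1) - a*T*1)) y₀ :=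
      hP.mul hWpoly
    have hden_ne : P y₀ * (D * y₀^2 - a*T*y₀ + a^2) ≠ 0 := by
      rw [← hW]; exact mul_ne_zero hp_ne hWy_ne
    have hq : HasDerivAt (fun y => y * (D * (P y)^2 - a*T*(P y) + a^2) / (P y * (D * y^2 - a*T*y + a^2))) _ y₀ :=
      hnum.div hden hden_ne
    have hfun : (fun y => y * W (P y) / (P y * W y)) =
        fun y => y * (D * (P y)^2 - a*T*(P y) + a^2) / (P y * (D * y^2 - a*T*y + a^2)) := by
      funext y; rw [hW, hW]
    rw [hfun, hq.deriv]
    have hp'val : p' = y₀ * W (P y₀) / (P y₀ * W y₀) := hP'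
    rw [hp'val, hW (P y₀), hW y₀] at *
    have hWf : y₀ * (D * y₀ - a * T) + a ^ 2 ≠ 0 := by
      intro h; apply hWy_ne; linear_combination h
    field_simp
    ring
  have main : ∀ y₀ ∈ Set.Ioo l r, Real.sign (deriv (deriv P) y₀) = -Real.sign T := by
    intro y₀ hy
    obtain ⟨hp_neg, hy_pos, hWy, hWp, hP'⟩ := hcond y₀ hy
    have hd2 := key y₀ hy
    have hsum := hpos y₀ hy
    have hfac : deriv (deriv P) y₀ =
        (a^2 * (y₀ - P y₀) * W (P y₀) / (-(P y₀)^3 * (W y₀)^2)) * (y₀ + P y₀) := by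
      rw [hd2]; ring
    have ha2 : 0 < a^2 := (sq_nonneg a).lt_of_ne (Ne.symm (pow_ne_zero 2 ha))
    have hp3 : 0 < -(P y₀)^3 := by
      have h3 : P y₀ ^ 3 < 0 := Odd.pow_neg ⟨1, by norm_num⟩ hp_neg
      linarith
    have hc : 0 < a^2 * (y₀ - P y₀) * W (P y₀) / (-(P y₀)^3 * (W y₀)^2) :=
      div_pos (mul_pos (mul_pos ha2 (by linarith)) hWp)
        (mul_pos hp3 (pow_pos hWy 2))
    rcases lt_or_gt_of_ne hT with hTneg | hTpos
    · rw [Real.sign_of_neg hTneg] at hsum ⊢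
      norm_num at hsum
      have hspos := sign_one_imp hsum
      rw [hfac, Real.sign_of_pos (mul_pos hc hspos)]; norm_num
    · rw [Real.sign_of_pos hTpos] at hsum ⊢
      have hsneg := sign_negone_imp hsum
      rw [hfac, Real.sign_of_neg (mul_neg_of_pos_of_neg hc hsneg)]
  have hcont : ContinuousOn P (Set.Ioo l r) :=
    fun x hx => (hdiff x hx).continuousAt.continuousWithinAt
  have hit : deriv^[2] P = deriv (deriv P) := rfl
  refine ⟨main, ?_, ?_⟩
  · intro hTpos
    apply strictConcaveOn_of_deriv2_neg (convex_Ioo l r) hcont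
    intro x hx
    rw [interior_Ioo] at hx
    have h := main x hx
    rw [Real.sign_of_pos hTpos] at h
    rw [hit]
    exact sign_negone_imp h
  · intro hTneg
    apply strictConvexOn_of_deriv2_pos (convex_Ioo l r) hcont
    intro x hx
    rw [interior_Ioo] at hx
    have h := main x hx
    rw [Real.sign_of_neg hTneg] at h
    norm_num at h
    rw [hit]
    exact sign_one_imp h
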